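/- arXiv:1810.09667 — 3 statements merged into one kernel-verified Lean document; each statement's English description precedes it below -/
import Mathlib

section
/- Let A, B, Ã be n×n real symmetric matrices such that λ₁(A) = … = λ_d(A) = 0, λ_{d+1}(A) > 0, and B is positive semidefinite. Let X₀ be an n×d matrix with A X₀ = 0 and X₀ᵀ B X₀ nonsingular. Suppose the functional f(X) = λ_max((XᵀBX)^{-1}Xᵀ(A+Ã)X), defined on n×d matrices X with XᵀBX positive definite, attains its minimum at X. Then ‖sin∠(col(X), col(X₀))‖² ≤ (‖Ã‖/λ_{d+1}(A)) · (1 + ‖B‖ · λ_max((X₀ᵀBX₀)^{-1}X₀ᵀX₀)). -/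
noncomputable section
open Matrix

/-- Spectral (operator 2-) norm of a real matrix. -/
noncomputable def specNorm {m n : ℕ} (M : Matrix (Fin m) (Fin n) ℝ) : ℝ :=
  ‖LinearMap.toContinuousLinearMap (Matrix.toEuclideanLin M)‖

/-- Eigenvalues of a Hermitian matrix, sorted in ascending order. -/
noncomputable def sortedEig {n : ℕ} {M : Matrix (Fin n) (Fin n) ℝ} (hM : M.IsHermitian) :
    Fin n → ℝ :=
  hM.eigenvalues ∘ Tuple.sort hM.eigenvalues

/-- λ_max(S⁻¹ M): the largest (real) eigenvalue of S⁻¹M. -/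
noncomputable def genLamMax {d : ℕ} (M S : Matrix (Fin d) (Fin d) ℝ) : ℝ :=
  sSup {r : ℝ | ∃ v : Fin d → ℝ, v ≠ 0 ∧ (S⁻¹ * M).mulVec v = r • v}

/-- Orthogonal projector onto a subspace, as a continuous linear map on the whole space. -/
noncomputable def projCLM {ι : Type*} [Fintype ι] (W : Submodule ℝ (EuclideanSpace ℝ ι)) :
    EuclideanSpace ℝ ι →L[ℝ] EuclideanSpace ℝ ι :=
  W.subtypeL.comp (W.orthogonalProjectionOnto)

/-- ‖sin∠(V,W)‖ = ‖P_V (I − P_W)‖, the largest sine of canonical angles. -/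
noncomputable def sinAngle {ι : Type*} [Fintype ι]
    (V W : Submodule ℝ (EuclideanSpace ℝ ι)) : ℝ :=
  ‖(projCLM V).comp (ContinuousLinearMap.id ℝ (EuclideanSpace ℝ ι) - projCLM W)‖

/-- Column space of a matrix, as a subspace of Euclidean space. -/
noncomputable def colSpaceE {ι κ : Type*} [Fintype ι] [Fintype κ] [DecidableEq κ]
    (M : Matrix ι κ ℝ) : Submodule ℝ (EuclideanSpace ℝ ι) :=
  LinearMap.range (Matrix.toEuclideanLin M)

/-! ### Auxiliary lemmas -/

section Aux

abbrev EucSp (n : ℕ) := EuclideanSpace ℝ (Fin n)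

lemma dot_eq_inner {n : ℕ} (v w : Fin n → ℝ) :
    v ⬝ᵥ w = (inner ℝ ((WithLp.equiv 2 _).symm v) ((WithLp.equiv 2 _).symm w) : ℝ) := by
  simp [PiLp.inner_apply, dotProduct, mul_comm]

lemma piLp_equiv_toEuclideanLin_apply' {m k : ℕ} (M : Matrix (Fin m) (Fin k) ℝ)
    (v : EuclideanSpace ℝ (Fin k)) :
    WithLp.equiv 2 (Fin m → ℝ) (Matrix.toEuclideanLin M v) = M *ᵥ WithLp.equiv 2 (Fin k → ℝ) v :=
  rfl

lemma equiv_zero' {m : ℕ} : WithLp.equiv 2 (Fin m → ℝ) 0 = 0 := rfl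

lemma dot_conj {n d : ℕ} (M : Matrix (Fin n) (Fin n) ℝ) (X : Matrix (Fin n) (Fin d) ℝ)
    (v : Fin d → ℝ) :
    v ⬝ᵥ ((Xᵀ * M * X) *ᵥ v) = (X *ᵥ v) ⬝ᵥ (M *ᵥ (X *ᵥ v)) := by
  rw [← Matrix.mulVec_mulVec, ← Matrix.mulVec_mulVec, Matrix.dotProduct_mulVec v,
    Matrix.vecMul_transpose, Matrix.dotProduct_mulVec (X *ᵥ v)]

lemma dot_transpose {n d : ℕ} (N : Matrix (Fin n) (Fin d) ℝ) (v : Fin d → ℝ) (w : Fin n → ℝ) :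
    v ⬝ᵥ (Nᵀ *ᵥ w) = (N *ᵥ v) ⬝ᵥ w := by
  rw [Matrix.dotProduct_mulVec, Matrix.vecMul_transpose]

lemma dot_herm {m : ℕ} {N : Matrix (Fin m) (Fin m) ℝ} (hN : N.IsHermitian)
    (v w : Fin m → ℝ) : v ⬝ᵥ (N *ᵥ w) = (N *ᵥ v) ⬝ᵥ w := by
  have hNt : Nᵀ = N := by
    rw [← conjTranspose_eq_transpose_of_trivial]; exact hN.eq
  have h2 : v ᵥ* N = N *ᵥ v := by rw [← Matrix.vecMul_transpose, hNt]
  rw [Matrix.dotProduct_mulVec, h2]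

lemma rayleigh_le_specNorm {n : ℕ} (M : Matrix (Fin n) (Fin n) ℝ) (v : Fin n → ℝ) :
    v ⬝ᵥ (M *ᵥ v) ≤ specNorm M * (v ⬝ᵥ v) := by
  classical
  set x : EucSp n := (WithLp.equiv 2 _).symm v with hx
  have h1 : v ⬝ᵥ (M *ᵥ v) = (inner ℝ x (Matrix.toEuclideanLin M x) : ℝ) := by
    rw [dot_eq_inner]
    simp [Matrix.toEuclideanLin_apply, hx]
  have h2 : v ⬝ᵥ v = ‖x‖ ^ 2 := by
    rw [dot_eq_inner, ← real_inner_self_eq_norm_sq]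
  rw [h1, h2]
  calc (inner ℝ x (Matrix.toEuclideanLin M x) : ℝ)
      ≤ ‖x‖ * ‖Matrix.toEuclideanLin M x‖ := real_inner_le_norm _ _
    _ ≤ ‖x‖ * (specNorm M * ‖x‖) := by
        apply mul_le_mul_of_nonneg_left _ (norm_nonneg _)
        exact (LinearMap.toContinuousLinearMap (Matrix.toEuclideanLin M)).le_opNorm x
    _ = specNorm M * ‖x‖ ^ 2 := by ring

lemma quad_eq_sum_eig {m : ℕ} {H : Matrix (Fin m) (Fin m) ℝ} (hH : H.IsHermitian)
    (x : EucSp m) :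
    (inner ℝ x (Matrix.toEuclideanLin H x) : ℝ)
      = ∑ i, hH.eigenvalues i * (hH.eigenvectorBasis.repr x i) ^ 2 := by
  classical
  set B := hH.eigenvectorBasis
  have hsum := B.sum_inner_mul_inner x (Matrix.toEuclideanLin H x)
  rw [← hsum]
  apply Finset.sum_congr rfl
  intro i _
  have he : Matrix.toEuclideanLin H (B i) = hH.eigenvalues i • (B i) := by
    apply (WithLp.equiv 2 (Fin m → ℝ)).injective
    simp only [piLp_equiv_toEuclideanLin_apply']
    have := hH.mulVec_eigenvectorBasis i
    simpa using this
  have hsymm : (Matrix.toEuclideanLin H).IsSymmetric :=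
    (Matrix.isHermitian_iff_isSymmetric).1 hH
  have : (inner ℝ (B i) (Matrix.toEuclideanLin H x) : ℝ)
      = hH.eigenvalues i * inner ℝ (B i) x := by
    rw [← hsymm (B i) x, he]
    simp [real_inner_smul_left, Finset.mul_sum, mul_assoc]
  rw [this]
  have hr : B.repr x i = inner ℝ x (B i) := by
    rw [B.repr_apply_apply, real_inner_comm]
  rw [hr, real_inner_comm (B i) x]; ring

lemma sum_repr_sq {m : ℕ} (B : OrthonormalBasis (Fin m) ℝ (EucSp m)) (x : EucSp m) :
    (∑ i, (B.repr x i) ^ 2) = ‖x‖ ^ 2 := by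
  have h2 : (inner ℝ (B.repr x) (B.repr x) : ℝ) = inner ℝ x x := B.repr.inner_map_map x x
  have h1 : (∑ i, (B.repr x i) ^ 2) = (inner ℝ (B.repr x) (B.repr x) : ℝ) := by
    rw [PiLp.inner_apply]; simp [pow_two]
  rw [h1, h2, real_inner_self_eq_norm_sq]

lemma rayleigh_le_of_eig_le {m : ℕ} {H : Matrix (Fin m) (Fin m) ℝ} (hH : H.IsHermitian)
    {Λ : ℝ} (hΛ : ∀ i, hH.eigenvalues i ≤ Λ) (w : Fin m → ℝ) :
    w ⬝ᵥ (H *ᵥ w) ≤ Λ * (w ⬝ᵥ w) := by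
  classical
  set x : EucSp m := (WithLp.equiv 2 _).symm w with hx
  have h1 : w ⬝ᵥ (H *ᵥ w) = (inner ℝ x (Matrix.toEuclideanLin H x) : ℝ) := by
    rw [dot_eq_inner]
    simp [Matrix.toEuclideanLin_apply, hx]
  have h2 : w ⬝ᵥ w = ‖x‖ ^ 2 := by
    rw [dot_eq_inner, ← real_inner_self_eq_norm_sq]
  rw [h1, h2, quad_eq_sum_eig hH x, ← sum_repr_sq hH.eigenvectorBasis x, Finset.mul_sum]
  apply Finset.sum_le_sum
  intro i _
  exact mul_le_mul_of_nonneg_right (hΛ i) (sq_nonneg _)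

lemma posdef_dot_pos {m : ℕ} {S : Matrix (Fin m) (Fin m) ℝ} (hS : S.PosDef)
    {v : Fin m → ℝ} (hv : v ≠ 0) : 0 < v ⬝ᵥ (S *ᵥ v) := by
  have := hS.dotProduct_mulVec_pos hv
  simpa using this

lemma posdef_of_psd_det {m : ℕ} {S : Matrix (Fin m) (Fin m) ℝ} (hS : S.PosSemidef)
    (hdet : IsUnit S.det) : S.PosDef := by
  refine Matrix.PosDef.of_dotProduct_mulVec_pos hS.1 fun v hv => ?_
  rcases lt_or_eq_of_le (hS.dotProduct_mulVec_nonneg v) with h | h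
  · exact h
  · exfalso
    have h0 : star v ⬝ᵥ (S *ᵥ v) = 0 := h.symm
    have hSv : S *ᵥ v = 0 := (hS.dotProduct_mulVec_zero_iff v).1 h0
    apply hv
    calc v = (S⁻¹ * S) *ᵥ v := by rw [Matrix.nonsing_inv_mul _ hdet, Matrix.one_mulVec]
    _ = S⁻¹ *ᵥ (S *ᵥ v) := by rw [Matrix.mulVec_mulVec]
    _ = 0 := by rw [hSv, Matrix.mulVec_zero]

lemma genLamMax_le {d : ℕ} {M S : Matrix (Fin d) (Fin d) ℝ} (hS : S.PosDef)
    {c : ℝ} (hc : 0 ≤ c)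
    (h : ∀ v : Fin d → ℝ, v ≠ 0 → v ⬝ᵥ (M *ᵥ v) ≤ c * (v ⬝ᵥ (S *ᵥ v))) :
    genLamMax M S ≤ c := by
  apply Real.sSup_le _ hc
  rintro r ⟨v, hv, hev⟩
  have hdet : IsUnit S.det := isUnit_iff_ne_zero.2 (ne_of_gt hS.det_pos)
  have hMv : M *ᵥ v = r • (S *ᵥ v) := by
    have h1 : M = S * (S⁻¹ * M) := by
      rw [← Matrix.mul_assoc, Matrix.mul_nonsing_inv _ hdet, Matrix.one_mul]
    calc M *ᵥ v = S *ᵥ ((S⁻¹ * M) *ᵥ v) := by rw [Matrix.mulVec_mulVec, ← h1]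
    _ = S *ᵥ (r • v) := by rw [hev]
    _ = r • (S *ᵥ v) := by rw [Matrix.mulVec_smul]
  have hq : v ⬝ᵥ (M *ᵥ v) = r * (v ⬝ᵥ (S *ᵥ v)) := by
    rw [hMv, dotProduct_smul]; rfl
  have hqpos := posdef_dot_pos hS hv
  have := h v hv
  rw [hq] at this
  exact le_of_mul_le_mul_right this hqpos

open scoped MatrixOrder in
lemma genLamMax_rayleigh {d : ℕ} {M S : Matrix (Fin d) (Fin d) ℝ}
    (hM : M.IsHermitian) (hS : S.PosDef) (v : Fin d → ℝ) :
    v ⬝ᵥ (M *ᵥ v) ≤ genLamMax M S * (v ⬝ᵥ (S *ᵥ v)) := by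
  classical
  rcases Nat.eq_zero_or_pos d with hd0 | hd0
  · subst hd0
    simp [dotProduct]
  set R := CFC.sqrt S with hRdef
  have hR : R.PosSemidef := (CFC.sqrt_nonneg S).posSemidef
  have hRR : R * R = S := CFC.sqrt_mul_sqrt_self S hS.posSemidef.nonneg
  have hdetS : IsUnit S.det := isUnit_iff_ne_zero.2 (ne_of_gt hS.det_pos)
  have hdetR : IsUnit R.det := by
    have : R.det * R.det = S.det := by rw [← Matrix.det_mul, hRR]
    apply isUnit_iff_ne_zero.2
    intro h0
    rw [h0, zero_mul] at this
    exact (ne_of_gt hS.det_pos) this.symm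
  have hRiR : R⁻¹ * R = 1 := Matrix.nonsing_inv_mul R hdetR
  have hRRi : R * R⁻¹ = 1 := Matrix.mul_nonsing_inv R hdetR
  have hRih : (R⁻¹).IsHermitian := hR.1.inv
  set H := R⁻¹ * M * R⁻¹ with hHdef
  have hH : H.IsHermitian := by
    have := Matrix.isHermitian_mul_mul_conjTranspose (R⁻¹) hM
    rwa [hRih.eq] at this
  obtain ⟨j₀, _, hj₀⟩ := Finset.exists_max_image Finset.univ hH.eigenvalues
    ⟨⟨0, hd0⟩, Finset.mem_univ _⟩
  set Λ := hH.eigenvalues j₀ with hΛdef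
  have hΛ : ∀ i, hH.eigenvalues i ≤ Λ := fun i => hj₀ i (Finset.mem_univ i)
  have heig : ∀ j : Fin d, H *ᵥ ⇑(hH.eigenvectorBasis j)
      = hH.eigenvalues j • ⇑(hH.eigenvectorBasis j) := fun j => hH.mulVec_eigenvectorBasis j
  have hbdd : ∀ r ∈ {r : ℝ | ∃ u : Fin d → ℝ, u ≠ 0 ∧ (S⁻¹ * M).mulVec u = r • u}, r ≤ Λ := by
    rintro r ⟨u, hu, heu⟩
    have hMu : M *ᵥ u = r • (S *ᵥ u) := by
      have h1 : M = S * (S⁻¹ * M) := by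
        rw [← Matrix.mul_assoc, Matrix.mul_nonsing_inv _ hdetS, Matrix.one_mul]
      calc M *ᵥ u = S *ᵥ ((S⁻¹ * M) *ᵥ u) := by rw [Matrix.mulVec_mulVec, ← h1]
      _ = S *ᵥ (r • u) := by rw [heu]
      _ = r • (S *ᵥ u) := by rw [Matrix.mulVec_smul]
    set w := R *ᵥ u with hwdef
    have hw : w ≠ 0 := by
      intro h0
      apply hu
      have : R⁻¹ *ᵥ w = u := by
        rw [hwdef, Matrix.mulVec_mulVec, hRiR, Matrix.one_mulVec]
      rw [h0, Matrix.mulVec_zero] at this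
      exact this.symm
    have hHw : H *ᵥ w = r • w := by
      have hRiS : R⁻¹ * S = R := by
        rw [← hRR, ← Matrix.mul_assoc, hRiR, Matrix.one_mul]
      calc H *ᵥ w = (H * R) *ᵥ u := by rw [hwdef, Matrix.mulVec_mulVec]
      _ = (R⁻¹ * M) *ᵥ u := by
          rw [hHdef, Matrix.mul_assoc (R⁻¹ * M), hRiR, Matrix.mul_one]
      _ = R⁻¹ *ᵥ (M *ᵥ u) := by rw [Matrix.mulVec_mulVec]
      _ = r • (R⁻¹ *ᵥ (S *ᵥ u)) := by rw [hMu, Matrix.mulVec_smul]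
      _ = r • ((R⁻¹ * S) *ᵥ u) := by rw [Matrix.mulVec_mulVec]
      _ = r • w := by rw [hRiS, hwdef]
    have hray : w ⬝ᵥ (H *ᵥ w) = r * (w ⬝ᵥ w) := by
      rw [hHw, dotProduct_smul]; rfl
    have hub := rayleigh_le_of_eig_le hH hΛ w
    rw [hray] at hub
    have hwpos : 0 < w ⬝ᵥ w := by
      rcases (dotProduct_self_eq_zero (v := w)).not.2 hw with h
      have hnn : 0 ≤ w ⬝ᵥ w := Finset.sum_nonneg fun i _ => mul_self_nonneg _
      exact lt_of_le_of_ne hnn (Ne.symm h)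
    exact le_of_mul_le_mul_right hub hwpos
  have hBdd : BddAbove {r : ℝ | ∃ u : Fin d → ℝ, u ≠ 0 ∧ (S⁻¹ * M).mulVec u = r • u} :=
    ⟨Λ, fun r hr => hbdd r hr⟩
  have hmem : Λ ∈ {r : ℝ | ∃ u : Fin d → ℝ, u ≠ 0 ∧ (S⁻¹ * M).mulVec u = r • u} := by
    set w : Fin d → ℝ := ⇑(hH.eigenvectorBasis j₀) with hwdef
    have hwne : w ≠ 0 := by
      intro h0
      have : hH.eigenvectorBasis j₀ = 0 := by
        ext i; exact congrFun h0 i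
      exact hH.eigenvectorBasis.orthonormal.ne_zero j₀ this
    refine ⟨R⁻¹ *ᵥ w, ?_, ?_⟩
    · intro h0
      apply hwne
      have : R *ᵥ (R⁻¹ *ᵥ w) = w := by
        rw [Matrix.mulVec_mulVec, hRRi, Matrix.one_mulVec]
      rw [h0, Matrix.mulVec_zero] at this
      exact this.symm
    · have hSi : S⁻¹ = R⁻¹ * R⁻¹ := by rw [← hRR, Matrix.mul_inv_rev]
      calc (S⁻¹ * M) *ᵥ (R⁻¹ *ᵥ w) = ((S⁻¹ * M) * R⁻¹) *ᵥ w := by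
            rw [Matrix.mulVec_mulVec]
      _ = (R⁻¹ * H) *ᵥ w := by
          rw [hSi, hHdef]
          simp [Matrix.mul_assoc]
      _ = R⁻¹ *ᵥ (H *ᵥ w) := by rw [Matrix.mulVec_mulVec]
      _ = R⁻¹ *ᵥ (Λ • w) := by rw [heig j₀, hwdef, hΛdef]
      _ = Λ • (R⁻¹ *ᵥ w) := by rw [Matrix.mulVec_smul]
  have hΛle : Λ ≤ genLamMax M S := le_csSup hBdd hmem
  set w := R *ᵥ v with hwdef
  have hq1 : v ⬝ᵥ (M *ᵥ v) = w ⬝ᵥ (H *ᵥ w) := by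
    have h1 : H *ᵥ w = (R⁻¹ * M) *ᵥ v := by
      rw [hwdef, Matrix.mulVec_mulVec, hHdef, Matrix.mul_assoc (R⁻¹ * M), hRiR,
        Matrix.mul_one]
    rw [h1, ← Matrix.mulVec_mulVec, dot_herm hRih w, hwdef, Matrix.mulVec_mulVec, hRiR,
      Matrix.one_mulVec]
  have hq2 : w ⬝ᵥ w = v ⬝ᵥ (S *ᵥ v) := by
    rw [hwdef, ← dot_herm hR.1 v (R *ᵥ v), Matrix.mulVec_mulVec, hRR]
  have hub := rayleigh_le_of_eig_le hH hΛ w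
  have hwnn : 0 ≤ w ⬝ᵥ w := Finset.sum_nonneg fun i _ => mul_self_nonneg _
  calc v ⬝ᵥ (M *ᵥ v) = w ⬝ᵥ (H *ᵥ w) := hq1
  _ ≤ Λ * (w ⬝ᵥ w) := hub
  _ ≤ genLamMax M S * (w ⬝ᵥ w) := mul_le_mul_of_nonneg_right hΛle hwnn
  _ = genLamMax M S * (v ⬝ᵥ (S *ᵥ v)) := by rw [hq2]

lemma projCLM_mem {ι : Type*} [Fintype ι] (V : Submodule ℝ (EuclideanSpace ℝ ι))
    (x : EuclideanSpace ℝ ι) : projCLM V x ∈ V := (V.orthogonalProjectionOnto x).2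

lemma norm_projCLM_le {ι : Type*} [Fintype ι] (V : Submodule ℝ (EuclideanSpace ℝ ι))
    (x : EuclideanSpace ℝ ι) : ‖projCLM V x‖ ≤ ‖x‖ := by
  have h1 : ‖projCLM V x‖ = ‖(V.orthogonalProjectionOnto x : EuclideanSpace ℝ ι)‖ := rfl
  rw [h1]
  calc ‖(V.orthogonalProjectionOnto x : EuclideanSpace ℝ ι)‖
      ≤ ‖V.orthogonalProjectionOnto‖ * ‖x‖ := (V.orthogonalProjectionOnto).le_opNorm x
  _ ≤ 1 * ‖x‖ := mul_le_mul_of_nonneg_right (Submodule.orthogonalProjectionOnto_norm_le _) (norm_nonneg _)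
  _ = ‖x‖ := one_mul _

lemma sinAngle_sq_le {ι : Type*} [Fintype ι] (V W : Submodule ℝ (EuclideanSpace ℝ ι))
    {K : ℝ} (hK : 0 ≤ K)
    (h : ∀ u ∈ V, ‖u - projCLM W u‖ ^ 2 ≤ K * ‖u‖ ^ 2) :
    sinAngle V W ^ 2 ≤ K := by
  classical
  set P := projCLM V
  set Q := projCLM W
  set T := P.comp (ContinuousLinearMap.id ℝ (EuclideanSpace ℝ ι) - Q) with hT
  have hPsa : IsSelfAdjoint P := isSelfAdjoint_starProjection V
  have hQsa : IsSelfAdjoint Q := isSelfAdjoint_starProjection W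
  have hadj : ContinuousLinearMap.adjoint T
      = (ContinuousLinearMap.id ℝ (EuclideanSpace ℝ ι) - Q).comp P := by
    rw [hT, ContinuousLinearMap.adjoint_comp, map_sub, ContinuousLinearMap.adjoint_id,
      hPsa.adjoint_eq, hQsa.adjoint_eq]
  have hnorm : ‖T‖ = ‖(ContinuousLinearMap.id ℝ (EuclideanSpace ℝ ι) - Q).comp P‖ := by
    rw [← hadj]
    exact (ContinuousLinearMap.adjoint.norm_map T).symm
  have hbound : ‖(ContinuousLinearMap.id ℝ (EuclideanSpace ℝ ι) - Q).comp P‖ ≤ Real.sqrt K := by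
    apply ContinuousLinearMap.opNorm_le_bound _ (Real.sqrt_nonneg K)
    intro x
    have hu : P x ∈ V := projCLM_mem V x
    have happ : ((ContinuousLinearMap.id ℝ (EuclideanSpace ℝ ι) - Q).comp P) x
        = P x - Q (P x) := by
      simp [ContinuousLinearMap.comp_apply, ContinuousLinearMap.sub_apply]
    rw [happ]
    have h2 := h (P x) hu
    have h3 : ‖P x - Q (P x)‖ ≤ Real.sqrt K * ‖P x‖ := by
      have h4 : ‖P x - Q (P x)‖ = Real.sqrt (‖P x - Q (P x)‖ ^ 2) := by
        rw [Real.sqrt_sq (norm_nonneg _)]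
      rw [h4]
      calc Real.sqrt (‖P x - Q (P x)‖ ^ 2) ≤ Real.sqrt (K * ‖P x‖ ^ 2) :=
            Real.sqrt_le_sqrt h2
      _ = Real.sqrt K * ‖P x‖ := by
          rw [Real.sqrt_mul hK, Real.sqrt_sq (norm_nonneg _)]
    calc ‖P x - Q (P x)‖ ≤ Real.sqrt K * ‖P x‖ := h3
    _ ≤ Real.sqrt K * ‖x‖ :=
        mul_le_mul_of_nonneg_left (norm_projCLM_le V x) (Real.sqrt_nonneg K)
  have hfin : sinAngle V W ≤ Real.sqrt K := by
    rw [sinAngle]; rw [← hT] at *; rw [hnorm]; exact hbound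
  calc sinAngle V W ^ 2 ≤ Real.sqrt K ^ 2 := by
        apply pow_le_pow_left₀ (norm_nonneg _) hfin
  _ = K := Real.sq_sqrt hK

lemma eig_dichotomy {n d : ℕ} (hd : d < n) {A : Matrix (Fin n) (Fin n) ℝ}
    (hA : A.IsHermitian)
    (hzero : ∀ i : Fin n, (i : ℕ) < d → sortedEig hA i = 0)
    (hpos : 0 < sortedEig hA ⟨d, hd⟩) (i : Fin n) :
    hA.eigenvalues i = 0 ∨ sortedEig hA ⟨d, hd⟩ ≤ hA.eigenvalues i := by
  set σ := Tuple.sort hA.eigenvalues with hσ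
  have hmono : Monotone (hA.eigenvalues ∘ σ) := Tuple.monotone_sort _
  have hi : hA.eigenvalues i = sortedEig hA (σ⁻¹ i) := by
    simp [sortedEig, hσ]
  by_cases hlt : ((σ⁻¹ i : Fin n) : ℕ) < d
  · left; rw [hi]; exact hzero _ hlt
  · right
    rw [hi]
    exact hmono (by rw [Fin.le_def]; exact Nat.le_of_not_lt hlt)

lemma card_zero_eig {n d : ℕ} (hd : d < n) {A : Matrix (Fin n) (Fin n) ℝ}
    (hA : A.IsHermitian)
    (hzero : ∀ i : Fin n, (i : ℕ) < d → sortedEig hA i = 0)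
    (hpos : 0 < sortedEig hA ⟨d, hd⟩) :
    (Finset.univ.filter (fun i : Fin n => hA.eigenvalues i = 0)).card = d := by
  classical
  set σ := Tuple.sort hA.eigenvalues with hσ
  have hmono : Monotone (hA.eigenvalues ∘ σ) := Tuple.monotone_sort _
  have hiff : ∀ i : Fin n, hA.eigenvalues i = 0 ↔ ((σ⁻¹ i : Fin n) : ℕ) < d := by
    intro i
    have hi : hA.eigenvalues i = sortedEig hA (σ⁻¹ i) := by simp [sortedEig, hσ]
    constructor
    · intro h0
      by_contra hge
      have : sortedEig hA ⟨d, hd⟩ ≤ sortedEig hA (σ⁻¹ i) :=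
        hmono (by rw [Fin.le_def]; exact Nat.le_of_not_lt hge)
      rw [← hi, h0] at this
      exact absurd (lt_of_lt_of_le hpos this) (lt_irrefl 0)
    · intro h; rw [hi]; exact hzero _ h
  have himg : Finset.univ.filter (fun i : Fin n => hA.eigenvalues i = 0)
      = (Finset.univ.filter (fun j : Fin n => (j : ℕ) < d)).image σ := by
    ext i
    simp only [Finset.mem_filter, Finset.mem_univ, true_and, Finset.mem_image]
    constructor
    · intro h
      exact ⟨σ⁻¹ i, (hiff i).1 h, by simp⟩
    · rintro ⟨j, hj, rfl⟩
      rw [hiff]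
      simpa using hj
  rw [himg, Finset.card_image_of_injective _ σ.injective]
  have hmap : Finset.univ.filter (fun j : Fin n => (j : ℕ) < d)
      = (Finset.univ : Finset (Fin d)).map (Fin.castLEEmb hd.le) := by
    ext j
    simp only [Finset.mem_filter, Finset.mem_univ, true_and, Finset.mem_map]
    constructor
    · intro h
      refine ⟨⟨(j : ℕ), h⟩, ?_⟩
      ext
      simp [Fin.castLEEmb, Fin.castLE]
    · rintro ⟨k, rfl⟩
      simp [Fin.castLEEmb, Fin.castLE]
  rw [hmap, Finset.card_map, Finset.card_univ, Fintype.card_fin]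

lemma gap_bound {n d : ℕ} (hd : d < n) {A : Matrix (Fin n) (Fin n) ℝ}
    (hA : A.IsHermitian)
    (hzero : ∀ i : Fin n, (i : ℕ) < d → sortedEig hA i = 0)
    (hpos : 0 < sortedEig hA ⟨d, hd⟩)
    {W : Submodule ℝ (EucSp n)}
    (hWker : W ≤ LinearMap.ker (Matrix.toEuclideanLin A))
    (hWrank : Module.finrank ℝ W = d)
    (u : EucSp n) :
    sortedEig hA ⟨d, hd⟩ * ‖u - projCLM W u‖ ^ 2
      ≤ (inner ℝ u (Matrix.toEuclideanLin A u) : ℝ) := by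
  classical
  set lam := sortedEig hA ⟨d, hd⟩ with hlam
  set B := hA.eigenvectorBasis with hB
  set c := fun i => B.repr u i with hc
  set Z : Finset (Fin n) := Finset.univ.filter (fun i : Fin n => hA.eigenvalues i = 0) with hZ
  have hdich := eig_dichotomy hd hA hzero hpos
  have hnn : ∀ i, 0 ≤ hA.eigenvalues i := by
    intro i
    rcases hdich i with h | h
    · exact le_of_eq h.symm
    · exact le_of_lt (lt_of_lt_of_le hpos h)
  set E₀ : Submodule ℝ (EucSp n) :=
    Submodule.span ℝ (Set.range fun i : {i : Fin n // hA.eigenvalues i = 0} => B ↑i) with hE₀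
  have horth : Orthonormal ℝ (fun i : {i : Fin n // hA.eigenvalues i = 0} => B ↑i) :=
    B.orthonormal.comp _ Subtype.val_injective
  have hrankE₀ : Module.finrank ℝ E₀ = d := by
    rw [hE₀, finrank_span_eq_card horth.linearIndependent]
    rw [Fintype.card_subtype]
    exact card_zero_eig hd hA hzero hpos
  have hkerle : LinearMap.ker (Matrix.toEuclideanLin A) ≤ E₀ := by
    intro x hx
    have h0 : Matrix.toEuclideanLin A x = 0 := hx
    have hsum0 : ∑ i, hA.eigenvalues i * (B.repr x i) ^ 2 = 0 := by
      rw [← quad_eq_sum_eig hA x, h0, inner_zero_right]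
    have hterm : ∀ i ∈ Finset.univ, hA.eigenvalues i * (B.repr x i) ^ 2 = 0 := by
      rw [← Finset.sum_eq_zero_iff_of_nonneg]
      · exact hsum0
      · intro i _
        exact mul_nonneg (hnn i) (sq_nonneg _)
    have hx' : x = ∑ i, (B.repr x i) • B i := (B.sum_repr x).symm
    rw [hx']
    apply Submodule.sum_mem
    intro i _
    by_cases hpi : hA.eigenvalues i = 0
    · exact Submodule.smul_mem _ _ (Submodule.subset_span ⟨⟨i, hpi⟩, rfl⟩)
    · have hz := hterm i (Finset.mem_univ i)
      have hci : B.repr x i = 0 := by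
        rcases mul_eq_zero.1 hz with h | h
        · exact absurd h hpi
        · exact pow_eq_zero_iff (by norm_num) |>.1 h
      rw [hci, zero_smul]
      exact Submodule.zero_mem _
  have hWE₀ : W = E₀ :=
    Submodule.eq_of_le_of_finrank_eq (le_trans hWker hkerle) (by rw [hWrank, hrankE₀])
  set w₀ : EucSp n := ∑ i ∈ Z, (c i) • B i with hw₀
  have hw₀W : w₀ ∈ W := by
    rw [hWE₀]
    apply Submodule.sum_mem
    intro i hi
    have hpi : hA.eigenvalues i = 0 := by
      rw [hZ] at hi
      exact (Finset.mem_filter.1 hi).2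
    exact Submodule.smul_mem _ _ (Submodule.subset_span ⟨⟨i, hpi⟩, rfl⟩)
  have hmin : ‖u - projCLM W u‖ ≤ ‖u - w₀‖ := by
    have heq : ‖u - projCLM W u‖ = ⨅ x : W, ‖u - x‖ := Submodule.starProjection_minimal u
    rw [heq]
    have hbdd : BddBelow (Set.range fun x : W => ‖u - (x : EucSp n)‖) := by
      refine ⟨0, ?_⟩
      rintro y ⟨x, rfl⟩
      exact norm_nonneg _
    exact ciInf_le hbdd ⟨w₀, hw₀W⟩
  have hrepr : ∀ i, B.repr (u - w₀) i = if i ∈ Z then 0 else c i := by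
    intro i
    have hrw₀ : B.repr w₀ i = if i ∈ Z then c i else 0 := by
      rw [hw₀, map_sum]
      simp only [_root_.map_smul, B.repr_self]
      have h7 : (∑ j ∈ Z, c j • EuclideanSpace.single j (1:ℝ)) i
          = ∑ j ∈ Z, (c j • EuclideanSpace.single j (1:ℝ)) i := by
        calc (∑ j ∈ Z, c j • EuclideanSpace.single j (1:ℝ)) i
            = (WithLp.linearEquiv 2 ℝ (Fin n → ℝ)
                (∑ j ∈ Z, c j • EuclideanSpace.single j (1:ℝ))) i := rfl
        _ = (∑ j ∈ Z, WithLp.linearEquiv 2 ℝ (Fin n → ℝ)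
                (c j • EuclideanSpace.single j (1:ℝ))) i := by rw [map_sum]
        _ = ∑ j ∈ Z, (WithLp.linearEquiv 2 ℝ (Fin n → ℝ)
                (c j • EuclideanSpace.single j (1:ℝ))) i := Finset.sum_apply i _ _
        _ = ∑ j ∈ Z, (c j • EuclideanSpace.single j (1:ℝ)) i := rfl
      rw [h7]
      have h8 : ∀ j ∈ Z, (c j • EuclideanSpace.single j (1:ℝ)) i
          = c j * (if i = j then 1 else 0) := by
        intro j _
        simp [EuclideanSpace.single_apply]
      rw [Finset.sum_congr rfl h8]
      simp [mul_ite, Finset.sum_ite_eq]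
    have h6 : B.repr (u - w₀) i = B.repr u i - B.repr w₀ i := by
      rw [map_sub]; rfl
    rw [h6, hrw₀]
    by_cases hiZ : i ∈ Z <;> simp [hiZ, hc]
  have hres : ‖u - w₀‖ ^ 2 = ∑ i, (if i ∈ Z then 0 else (c i) ^ 2) := by
    rw [← sum_repr_sq B (u - w₀)]
    apply Finset.sum_congr rfl
    intro i _
    rw [hrepr i]
    by_cases hiZ : i ∈ Z <;> simp [hiZ]
  have hchain : lam * ‖u - w₀‖ ^ 2 ≤ (inner ℝ u (Matrix.toEuclideanLin A u) : ℝ) := by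
    rw [quad_eq_sum_eig hA u, hres, Finset.mul_sum]
    apply Finset.sum_le_sum
    intro i _
    by_cases hiZ : i ∈ Z
    · have hpi : hA.eigenvalues i = 0 := (Finset.mem_filter.1 hiZ).2
      simp [hiZ, hpi]
    · have hpi : hA.eigenvalues i ≠ 0 := by
        intro h0
        exact hiZ (by rw [hZ]; exact Finset.mem_filter.2 ⟨Finset.mem_univ _, h0⟩)
      have hge : lam ≤ hA.eigenvalues i := by
        rcases hdich i with h | h
        · exact absurd h hpi
        · exact h
      simp only [hiZ, if_false]
      exact mul_le_mul_of_nonneg_right hge (sq_nonneg _)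
  calc lam * ‖u - projCLM W u‖ ^ 2 ≤ lam * ‖u - w₀‖ ^ 2 := by
        apply mul_le_mul_of_nonneg_left _ (le_of_lt hpos)
        apply pow_le_pow_left₀ (norm_nonneg _) hmin
  _ ≤ (inner ℝ u (Matrix.toEuclideanLin A u) : ℝ) := hchain

lemma inner_toEuclideanLin {m : ℕ} (M : Matrix (Fin m) (Fin m) ℝ) (x : EucSp m) :
    (inner ℝ x (Matrix.toEuclideanLin M x) : ℝ)
      = (WithLp.equiv 2 _ x) ⬝ᵥ (M *ᵥ (WithLp.equiv 2 _ x)) := by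
  rw [dot_eq_inner]
  simp [Matrix.toEuclideanLin_apply]

lemma dot_self_norm {m : ℕ} (x : EucSp m) :
    (WithLp.equiv 2 _ x) ⬝ᵥ (WithLp.equiv 2 _ x) = ‖x‖ ^ 2 := by
  rw [dot_eq_inner]
  exact real_inner_self_eq_norm_sq x

end Aux

/-- Multivariate eigenvector perturbation bound: if A is symmetric with d smallest
eigenvalues 0 and λ_{d+1}(A) > 0, B ⪰ 0, A X₀ = 0 with X₀ᵀBX₀ nonsingular, and X
minimizes f(Y) = λ_max((YᵀBY)⁻¹Yᵀ(A+Ã)Y) over {Y : YᵀBY ≻ 0}, then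
‖sin∠(col X, col X₀)‖² ≤ (‖Ã‖/λ_{d+1}(A))(1 + ‖B‖ λ_max((X₀ᵀBX₀)⁻¹X₀ᵀX₀)). -/
theorem invariant_subspace_perturbation {n d : ℕ} (hd : d < n)
    (A B At : Matrix (Fin n) (Fin n) ℝ)
    (hA : A.IsHermitian) (hAt : At.IsHermitian) (hB : B.PosSemidef)
    (hzero : ∀ i : Fin n, (i : ℕ) < d → sortedEig hA i = 0)
    (hpos : 0 < sortedEig hA ⟨d, hd⟩)
    (X₀ : Matrix (Fin n) (Fin d) ℝ) (hAX₀ : A * X₀ = 0)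
    (hX₀B : IsUnit (X₀ᵀ * B * X₀).det)
    (X : Matrix (Fin n) (Fin d) ℝ) (hXB : (Xᵀ * B * X).PosDef)
    (hmin : ∀ Y : Matrix (Fin n) (Fin d) ℝ, (Yᵀ * B * Y).PosDef →
      genLamMax (Xᵀ * (A + At) * X) (Xᵀ * B * X) ≤
        genLamMax (Yᵀ * (A + At) * Y) (Yᵀ * B * Y)) :
    sinAngle (colSpaceE X) (colSpaceE X₀) ^ 2 ≤
      (specNorm At / sortedEig hA ⟨d, hd⟩) *
        (1 + specNorm B * genLamMax (X₀ᵀ * X₀) (X₀ᵀ * B * X₀)) := by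
  classical
  set lam := sortedEig hA ⟨d, hd⟩ with hlamdef
  set eps := specNorm At with hepsdef
  set sB := specNorm B with hsBdef
  set mu := genLamMax (X₀ᵀ * X₀) (X₀ᵀ * B * X₀) with hmudef
  have hlam : 0 < lam := hpos
  have heps : 0 ≤ eps := norm_nonneg _
  have hsB0 : 0 ≤ sB := norm_nonneg _
  rcases Nat.eq_zero_or_pos d with hd0 | hd0
  · -- degenerate case d = 0
    subst hd0
    have hmu : mu = 0 := by
      rw [hmudef, genLamMax]
      have hset : {r : ℝ | ∃ v : Fin 0 → ℝ,
          v ≠ 0 ∧ ((X₀ᵀ * B * X₀)⁻¹ * (X₀ᵀ * X₀)).mulVec v = r • v} = ∅ := by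
        ext r
        simp only [Set.mem_setOf_eq, Set.mem_empty_iff_false, iff_false]
        rintro ⟨v, hv, -⟩
        exact hv (funext fun i => i.elim0)
      rw [hset, Real.sSup_empty]
    have hsin : sinAngle (colSpaceE X) (colSpaceE X₀) ^ 2 ≤ 0 := by
      apply sinAngle_sq_le _ _ le_rfl
      rintro u ⟨v, rfl⟩
      have hv : v = 0 := by
        apply (WithLp.equiv 2 (Fin 0 → ℝ)).injective
        exact funext fun i => i.elim0
      rw [hv, map_zero]
      simp
    calc sinAngle (colSpaceE X) (colSpaceE X₀) ^ 2 ≤ 0 := hsin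
    _ ≤ (eps / lam) * (1 + sB * mu) := by
        rw [hmu]
        have : (1 : ℝ) + sB * 0 = 1 := by ring
        rw [this, mul_one]
        exact div_nonneg heps (le_of_lt hlam)
  · -- main case 0 < d
    -- Hermitian bookkeeping
    have hX₀h : X₀ᴴ = X₀ᵀ := Matrix.conjTranspose_eq_transpose_of_trivial _
    have hXh : Xᴴ = Xᵀ := Matrix.conjTranspose_eq_transpose_of_trivial _
    have hS₀psd : (X₀ᵀ * B * X₀).PosSemidef := by
      have := hB.conjTranspose_mul_mul_same X₀
      rwa [hX₀h] at this
    have hS₀pd : (X₀ᵀ * B * X₀).PosDef := posdef_of_psd_det hS₀psd hX₀B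
    have hAAt : (A + At).IsHermitian := hA.add hAt
    have hXAXh : (Xᵀ * (A + At) * X).IsHermitian := by
      have := Matrix.isHermitian_conjTranspose_mul_mul X hAAt
      rwa [hXh] at this
    have hX₀X₀h : (X₀ᵀ * X₀).IsHermitian := by
      have := Matrix.isHermitian_conjTranspose_mul_self X₀
      rwa [hX₀h] at this
    -- mu ≥ 0
    have hmu0 : 0 ≤ mu := by
      set v₀ : Fin d → ℝ := Pi.single ⟨0, hd0⟩ 1 with hv₀
      have hv₀ne : v₀ ≠ 0 := by
        intro h0
        have := congrFun h0 ⟨0, hd0⟩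
        simp [hv₀] at this
      have h1 : (0:ℝ) ≤ v₀ ⬝ᵥ ((X₀ᵀ * X₀) *ᵥ v₀) := by
        have : v₀ ⬝ᵥ ((X₀ᵀ * X₀) *ᵥ v₀) = (X₀ *ᵥ v₀) ⬝ᵥ (X₀ *ᵥ v₀) := by
          rw [← Matrix.mulVec_mulVec, dot_transpose]
        rw [this]
        exact Finset.sum_nonneg fun i _ => mul_self_nonneg _
      have h2 := genLamMax_rayleigh hX₀X₀h hS₀pd v₀
      have h3 := posdef_dot_pos hS₀pd hv₀ne
      by_contra hneg
      push_neg at hneg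
      have : mu * (v₀ ⬝ᵥ ((X₀ᵀ * B * X₀) *ᵥ v₀)) < 0 := mul_neg_of_neg_of_pos hneg h3
      linarith
    -- rho ≤ eps * mu
    set rho := genLamMax (Xᵀ * (A + At) * X) (Xᵀ * B * X) with hrhodef
    have hrho : rho ≤ eps * mu := by
      have hstep := hmin X₀ hS₀pd
      have hbound : genLamMax (X₀ᵀ * (A + At) * X₀) (X₀ᵀ * B * X₀) ≤ eps * mu := by
        apply genLamMax_le hS₀pd (mul_nonneg heps hmu0)
        intro v hv
        have hq1 : v ⬝ᵥ ((X₀ᵀ * (A + At) * X₀) *ᵥ v)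
            = (X₀ *ᵥ v) ⬝ᵥ (At *ᵥ (X₀ *ᵥ v)) := by
          rw [dot_conj]
          have : (A + At) *ᵥ (X₀ *ᵥ v) = A *ᵥ (X₀ *ᵥ v) + At *ᵥ (X₀ *ᵥ v) := by
            rw [Matrix.add_mulVec]
          rw [this, dotProduct_add]
          have hz : A *ᵥ (X₀ *ᵥ v) = 0 := by
            rw [Matrix.mulVec_mulVec, hAX₀, Matrix.zero_mulVec]
          rw [hz, dotProduct_zero, zero_add]
        have hq2 : (X₀ *ᵥ v) ⬝ᵥ (At *ᵥ (X₀ *ᵥ v))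
            ≤ eps * ((X₀ *ᵥ v) ⬝ᵥ (X₀ *ᵥ v)) := rayleigh_le_specNorm At (X₀ *ᵥ v)
        have hq3 : (X₀ *ᵥ v) ⬝ᵥ (X₀ *ᵥ v) = v ⬝ᵥ ((X₀ᵀ * X₀) *ᵥ v) := by
          rw [← Matrix.mulVec_mulVec, dot_transpose]
        have hq4 : v ⬝ᵥ ((X₀ᵀ * X₀) *ᵥ v)
            ≤ mu * (v ⬝ᵥ ((X₀ᵀ * B * X₀) *ᵥ v)) := genLamMax_rayleigh hX₀X₀h hS₀pd v
        calc v ⬝ᵥ ((X₀ᵀ * (A + At) * X₀) *ᵥ v)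
            = (X₀ *ᵥ v) ⬝ᵥ (At *ᵥ (X₀ *ᵥ v)) := hq1
        _ ≤ eps * ((X₀ *ᵥ v) ⬝ᵥ (X₀ *ᵥ v)) := hq2
        _ = eps * (v ⬝ᵥ ((X₀ᵀ * X₀) *ᵥ v)) := by rw [hq3]
        _ ≤ eps * (mu * (v ⬝ᵥ ((X₀ᵀ * B * X₀) *ᵥ v))) :=
            mul_le_mul_of_nonneg_left hq4 heps
        _ = (eps * mu) * (v ⬝ᵥ ((X₀ᵀ * B * X₀) *ᵥ v)) := by ring
      exact le_trans hstep hbound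
    -- subspace facts
    have hWker : colSpaceE X₀ ≤ LinearMap.ker (Matrix.toEuclideanLin A) := by
      rintro u ⟨v, rfl⟩
      rw [LinearMap.mem_ker]
      apply (WithLp.equiv 2 (Fin n → ℝ)).injective
      rw [piLp_equiv_toEuclideanLin_apply', piLp_equiv_toEuclideanLin_apply',
        Matrix.mulVec_mulVec, hAX₀, Matrix.zero_mulVec]
      simp
    have hker0 : ∀ v : EuclideanSpace ℝ (Fin d),
        Matrix.toEuclideanLin X₀ v = 0 → v = 0 := by
      intro v hv
      set w := WithLp.equiv 2 (Fin d → ℝ) v with hw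
      have hv' : X₀ *ᵥ w = 0 := by
        have h9 := congrArg (WithLp.equiv 2 (Fin n → ℝ)) hv
        rwa [piLp_equiv_toEuclideanLin_apply', equiv_zero'] at h9
      have hS₀v : (X₀ᵀ * B * X₀) *ᵥ w = 0 := by
        rw [← Matrix.mulVec_mulVec, ← Matrix.mulVec_mulVec, hv', Matrix.mulVec_zero,
          Matrix.mulVec_zero]
      have hw0 : w = 0 := by
        calc w = ((X₀ᵀ * B * X₀)⁻¹ * (X₀ᵀ * B * X₀)) *ᵥ w := by
              rw [Matrix.nonsing_inv_mul _ hX₀B, Matrix.one_mulVec]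
        _ = (X₀ᵀ * B * X₀)⁻¹ *ᵥ ((X₀ᵀ * B * X₀) *ᵥ w) := by rw [Matrix.mulVec_mulVec]
        _ = 0 := by rw [hS₀v, Matrix.mulVec_zero]
      apply (WithLp.equiv 2 (Fin d → ℝ)).injective
      rw [← hw, hw0, equiv_zero']
    have hinj : Function.Injective (Matrix.toEuclideanLin X₀) := by
      intro v w hvw
      have h0 : Matrix.toEuclideanLin X₀ (v - w) = 0 := by
        rw [map_sub, hvw, sub_self]
      exact sub_eq_zero.mp (hker0 _ h0)
    have hWrank : Module.finrank ℝ (colSpaceE X₀) = d := by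
      rw [colSpaceE]
      rw [LinearMap.finrank_range_of_inj hinj]
      exact finrank_euclideanSpace_fin
    -- the pointwise bound and conclusion
    apply sinAngle_sq_le _ _
      (mul_nonneg (div_nonneg heps hlam.le)
        (by nlinarith [mul_nonneg hsB0 hmu0]))
    rintro u ⟨v, rfl⟩
    set u' := WithLp.equiv 2 (Fin n → ℝ) (Matrix.toEuclideanLin X v) with hu'
    set v' := WithLp.equiv 2 (Fin d → ℝ) v with hv'
    have hu'v : u' = X *ᵥ v' := by
      rw [hu', piLp_equiv_toEuclideanLin_apply']
    have hgap := gap_bound hd hA hzero hpos hWker hWrank (Matrix.toEuclideanLin X v)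
    rw [inner_toEuclideanLin] at hgap
    set nu := ‖Matrix.toEuclideanLin X v‖ with hnudef
    have hnu : u' ⬝ᵥ u' = nu ^ 2 := dot_self_norm _
    have h1 : u' ⬝ᵥ (A *ᵥ u')
        = u' ⬝ᵥ ((A + At) *ᵥ u') - u' ⬝ᵥ (At *ᵥ u') := by
      rw [Matrix.add_mulVec, dotProduct_add]; ring
    have h2 : u' ⬝ᵥ ((A + At) *ᵥ u') ≤ rho * (u' ⬝ᵥ (B *ᵥ u')) := by
      have h2a := genLamMax_rayleigh hXAXh hXB v'
      rw [dot_conj, dot_conj] at h2a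
      rw [hu'v]
      exact h2a
    have hBnn : 0 ≤ u' ⬝ᵥ (B *ᵥ u') := by
      have := hB.dotProduct_mulVec_nonneg u'
      simpa using this
    have h3 : rho * (u' ⬝ᵥ (B *ᵥ u')) ≤ (eps * mu) * (u' ⬝ᵥ (B *ᵥ u')) :=
      mul_le_mul_of_nonneg_right hrho hBnn
    have h4 : u' ⬝ᵥ (B *ᵥ u') ≤ sB * nu ^ 2 := by
      have := rayleigh_le_specNorm B u'
      rwa [hnu] at this
    have h5 : -(u' ⬝ᵥ (At *ᵥ u')) ≤ eps * nu ^ 2 := by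
      have hnegnorm : specNorm (-At) = eps := by
        rw [hepsdef, specNorm, specNorm, map_neg, map_neg, norm_neg]
      have h5a := rayleigh_le_specNorm (-At) u'
      rw [hnegnorm, hnu, Matrix.neg_mulVec, dotProduct_neg] at h5a
      exact h5a
    have h6 : (eps * mu) * (u' ⬝ᵥ (B *ᵥ u')) ≤ eps * mu * (sB * nu ^ 2) :=
      mul_le_mul_of_nonneg_left h4 (mul_nonneg heps hmu0)
    have hfinal : lam * ‖Matrix.toEuclideanLin X v
        - projCLM (colSpaceE X₀) (Matrix.toEuclideanLin X v)‖ ^ 2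
        ≤ eps * (1 + sB * mu) * nu ^ 2 := by
      have hc1 : u' ⬝ᵥ (A *ᵥ u') ≤ eps * mu * (sB * nu ^ 2) + eps * nu ^ 2 := by
        rw [h1]
        have := le_trans h2 (le_trans h3 h6)
        linarith
      calc lam * ‖Matrix.toEuclideanLin X v
          - projCLM (colSpaceE X₀) (Matrix.toEuclideanLin X v)‖ ^ 2
          ≤ u' ⬝ᵥ (A *ᵥ u') := hgap
      _ ≤ eps * mu * (sB * nu ^ 2) + eps * nu ^ 2 := hc1
      _ = eps * (1 + sB * mu) * nu ^ 2 := by ring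
    rw [div_mul_eq_mul_div, div_mul_eq_mul_div, le_div_iff₀ hlam]
    calc ‖Matrix.toEuclideanLin X v
        - projCLM (colSpaceE X₀) (Matrix.toEuclideanLin X v)‖ ^ 2 * lam
        = lam * ‖Matrix.toEuclideanLin X v
            - projCLM (colSpaceE X₀) (Matrix.toEuclideanLin X v)‖ ^ 2 := by ring
    _ ≤ eps * (1 + sB * mu) * nu ^ 2 := hfinal
    _ = eps * (1 + sB * mu) * nu ^ 2 := rfl
end
end

section
/- Let X₀ be an n×d matrix and P^⊥ = I − P the orthogonal projector along the column space of (X₀;−I_d), written in block form with upper-left n×n block P₁. Then λ_min(P₁) = 1/(1+‖X₀‖²), where ‖X₀‖ is the spectral (largest singular value) norm of X₀. -/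
set_option maxHeartbeats 1000000

noncomputable section
open Matrix

namespace MinEigAux

lemma dot_self_eq {k : ℕ} (v : EuclideanSpace ℝ (Fin k)) :
    dotProduct (v : Fin k → ℝ) (v : Fin k → ℝ) = ‖v‖ ^ 2 := by
  rw [← real_inner_self_eq_norm_sq]
  simp [PiLp.inner_apply, dotProduct, RCLike.inner_apply, starRingEnd_apply]
  rw [EuclideanSpace.norm_eq, Real.sq_sqrt (by positivity)]
  congr 1; ext i; rw [Real.norm_eq_abs, sq_abs, sq]

lemma specNorm_nonneg {m n : ℕ} (M : Matrix (Fin m) (Fin n) ℝ) : 0 ≤ specNorm M :=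
  norm_nonneg _

lemma norm_transpose_mulVec_le {n d : ℕ} (X₀ : Matrix (Fin n) (Fin d) ℝ)
    (v : EuclideanSpace ℝ (Fin n)) :
    dotProduct (X₀ᵀ *ᵥ (v : Fin n → ℝ)) (X₀ᵀ *ᵥ (v : Fin n → ℝ))
      ≤ specNorm X₀ ^ 2 * ‖v‖ ^ 2 := by
  classical
  set L : EuclideanSpace ℝ (Fin d) →L[ℝ] EuclideanSpace ℝ (Fin n) :=
    LinearMap.toContinuousLinearMap (Matrix.toEuclideanLin X₀) with hL
  set A : EuclideanSpace ℝ (Fin n) →L[ℝ] EuclideanSpace ℝ (Fin d) :=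
    LinearMap.toContinuousLinearMap (Matrix.toEuclideanLin X₀ᵀ) with hA
  have htrans : X₀ᴴ = X₀ᵀ := by ext i j; simp [conjTranspose_apply]
  have hadj : A = ContinuousLinearMap.adjoint L := by
    rw [hA, hL, ← LinearMap.adjoint_toContinuousLinearMap, ← htrans,
      Matrix.toEuclideanLin_conjTranspose_eq_adjoint]
  have hAnorm : ‖A‖ = specNorm X₀ := by
    rw [hadj]; exact (ContinuousLinearMap.adjoint : _ ≃ₗᵢ⋆[ℝ] _).norm_map L
  have hw : (A v : Fin d → ℝ) = X₀ᵀ *ᵥ (v : Fin n → ℝ) := rfl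
  rw [← hw, dot_self_eq]
  have h1 : ‖A v‖ ≤ specNorm X₀ * ‖v‖ := by
    simpa [hAnorm] using A.le_opNorm v
  calc ‖A v‖ ^ 2 ≤ (specNorm X₀ * ‖v‖) ^ 2 := pow_le_pow_left₀ (norm_nonneg _) h1 2
    _ = specNorm X₀ ^ 2 * ‖v‖ ^ 2 := mul_pow _ _ _

lemma exists_top_eigvec {n d : ℕ} (hn : 0 < n) (X₀ : Matrix (Fin n) (Fin d) ℝ) :
    ∃ v : EuclideanSpace ℝ (Fin n), v ≠ 0 ∧
      (X₀ * X₀ᵀ) *ᵥ (v : Fin n → ℝ) = (specNorm X₀ ^ 2) • (v : Fin n → ℝ) := by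
  classical
  set L : EuclideanSpace ℝ (Fin d) →L[ℝ] EuclideanSpace ℝ (Fin n) :=
    LinearMap.toContinuousLinearMap (Matrix.toEuclideanLin X₀) with hL
  set A : EuclideanSpace ℝ (Fin n) →L[ℝ] EuclideanSpace ℝ (Fin d) :=
    LinearMap.toContinuousLinearMap (Matrix.toEuclideanLin X₀ᵀ) with hA
  have htrans : X₀ᴴ = X₀ᵀ := by ext i j; simp [conjTranspose_apply]
  have hadj : A = ContinuousLinearMap.adjoint L := by
    rw [hA, hL, ← LinearMap.adjoint_toContinuousLinearMap, ← htrans,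
      Matrix.toEuclideanLin_conjTranspose_eq_adjoint]
  have hAnorm : ‖A‖ = specNorm X₀ := by
    rw [hadj]; exact (ContinuousLinearMap.adjoint : _ ≃ₗᵢ⋆[ℝ] _).norm_map L
  set c : ℝ := specNorm X₀ with hc
  have hc0 : 0 ≤ c := hAnorm ▸ norm_nonneg A
  set T : EuclideanSpace ℝ (Fin n) →ₗ[ℝ] EuclideanSpace ℝ (Fin n) :=
    Matrix.toEuclideanLin (X₀ * X₀ᵀ) with hT
  have hherm : (X₀ * X₀ᵀ).IsHermitian := by
    rw [← htrans]; exact isHermitian_mul_conjTranspose_self X₀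
  have hsym : T.IsSymmetric := Matrix.isHermitian_iff_isSymmetric.1 hherm
  haveI : Nontrivial (EuclideanSpace ℝ (Fin n)) := by
    refine nontrivial_of_ne (EuclideanSpace.single ⟨0, hn⟩ (1:ℝ)) 0 fun h => ?_
    simpa using congrArg (fun f => f ⟨0, hn⟩) h
  haveI : Nonempty { x : EuclideanSpace ℝ (Fin n) // x ≠ 0 } :=
    nonempty_subtype.2 (exists_ne 0)
  have hinner : ∀ a b : EuclideanSpace ℝ (Fin n),
      (inner ℝ a b : ℝ) = dotProduct (a : Fin n → ℝ) (b : Fin n → ℝ) := by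
    intro a b
    simp [PiLp.inner_apply, dotProduct, RCLike.inner_apply, starRingEnd_apply, mul_comm]
  have hinnerd : ∀ a b : EuclideanSpace ℝ (Fin d),
      (inner ℝ a b : ℝ) = dotProduct (a : Fin d → ℝ) (b : Fin d → ℝ) := by
    intro a b
    simp [PiLp.inner_apply, dotProduct, RCLike.inner_apply, starRingEnd_apply, mul_comm]
  have hterm : ∀ x : EuclideanSpace ℝ (Fin n), (inner ℝ (T x) x : ℝ) = ‖A x‖ ^ 2 := by
    intro x
    have h1 : (T x : Fin n → ℝ) = (X₀ * X₀ᵀ) *ᵥ (x : Fin n → ℝ) := rfl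
    have h2 : (A x : Fin d → ℝ) = X₀ᵀ *ᵥ (x : Fin n → ℝ) := rfl
    rw [hinner, ← real_inner_self_eq_norm_sq, hinnerd, h1, h2, ← Matrix.mulVec_mulVec,
      Matrix.dotProduct_mulVec, Matrix.vecMul_transpose]
  have hnorm2 : ∀ x : EuclideanSpace ℝ (Fin n), x ≠ 0 → (0:ℝ) < ‖x‖ ^ 2 := by
    intro x hx
    have := norm_pos_iff.2 hx
    positivity
  have hle_term : ∀ x : { x : EuclideanSpace ℝ (Fin n) // x ≠ 0 },
      (inner ℝ (T x) (x : EuclideanSpace ℝ (Fin n)) : ℝ) / ‖(x : EuclideanSpace ℝ (Fin n))‖ ^ 2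
        ≤ c ^ 2 := by
    intro x
    rw [div_le_iff₀ (hnorm2 _ x.2), hterm]
    have h1 : ‖A x‖ ≤ c * ‖(x : EuclideanSpace ℝ (Fin n))‖ := by
      simpa [hAnorm] using A.le_opNorm (x : EuclideanSpace ℝ (Fin n))
    calc ‖A x‖ ^ 2 ≤ (c * ‖(x : EuclideanSpace ℝ (Fin n))‖) ^ 2 :=
          pow_le_pow_left₀ (norm_nonneg _) h1 2
      _ = c ^ 2 * ‖(x : EuclideanSpace ℝ (Fin n))‖ ^ 2 := mul_pow _ _ _
  set lam : ℝ := ⨆ x : { x : EuclideanSpace ℝ (Fin n) // x ≠ 0 },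
      (inner ℝ (T x) (x : EuclideanSpace ℝ (Fin n)) : ℝ) / ‖(x : EuclideanSpace ℝ (Fin n))‖ ^ 2
    with hlam
  have heig : Module.End.HasEigenvalue T lam := by
    have h := hsym.hasEigenvalue_iSup_of_finiteDimensional
    simp only [RCLike.re_to_real, RCLike.ofReal_real_eq_id, id] at h
    exact h
  have hbdd : BddAbove (Set.range fun x : { x : EuclideanSpace ℝ (Fin n) // x ≠ 0 } =>
      (inner ℝ (T x) (x : EuclideanSpace ℝ (Fin n)) : ℝ) / ‖(x : EuclideanSpace ℝ (Fin n))‖ ^ 2) :=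
    ⟨c ^ 2, by rintro y ⟨x, rfl⟩; exact hle_term x⟩
  have hle : lam ≤ c ^ 2 := ciSup_le hle_term
  have hsq : ∀ x : EuclideanSpace ℝ (Fin n), ‖A x‖ ^ 2 ≤ lam * ‖x‖ ^ 2 := by
    intro x
    rcases eq_or_ne x 0 with rfl | hx
    · simp
    · have h1 : (inner ℝ (T x) x : ℝ) / ‖x‖ ^ 2 ≤ lam := le_ciSup hbdd ⟨x, hx⟩
      rw [div_le_iff₀ (hnorm2 _ hx), hterm] at h1
      exact h1
  have hlam0 : 0 ≤ lam := by
    obtain ⟨x, hx⟩ := exists_ne (0 : EuclideanSpace ℝ (Fin n))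
    have h1 := hsq x
    nlinarith [norm_nonneg (A x), hnorm2 x hx]
  have hge : c ^ 2 ≤ lam := by
    have hA_le : ‖A‖ ≤ Real.sqrt lam := by
      refine A.opNorm_le_bound (Real.sqrt_nonneg _) fun x => ?_
      have h1 := hsq x
      have h2 : (0:ℝ) ≤ Real.sqrt lam * ‖x‖ := by positivity
      nlinarith [Real.sq_sqrt hlam0, norm_nonneg (A x), norm_nonneg x, Real.sqrt_nonneg lam]
    have := pow_le_pow_left₀ (norm_nonneg A) hA_le 2
    rwa [Real.sq_sqrt hlam0, hAnorm] at this
  have hlamc : lam = c ^ 2 := le_antisymm hle hge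
  rw [hlamc] at heig
  obtain ⟨v, hv⟩ := heig.exists_hasEigenvector
  refine ⟨v, hv.2, ?_⟩
  have h1 : T v = c ^ 2 • v := hv.apply_eq_smul
  exact congrArg (fun y : EuclideanSpace ℝ (Fin n) => (y : Fin n → ℝ)) h1

end MinEigAux

open MinEigAux in
/-- The upper-left n×n block P₁ of I − P, where P is the orthogonal projector onto
col((X₀;−I)), has smallest eigenvalue 1/(1+‖X₀‖²). -/
theorem min_eigenvalue_upper_left_block {n d : ℕ} (hn : 0 < n)
    (X₀ : Matrix (Fin n) (Fin d) ℝ) :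
    IsLeast
      {r : ℝ | ∃ v : Fin n → ℝ, v ≠ 0 ∧
        (((1 : Matrix (Fin n ⊕ Fin d) (Fin n ⊕ Fin d) ℝ) -
            Matrix.fromRows X₀ (-1 : Matrix (Fin d) (Fin d) ℝ) *
              ((Matrix.fromRows X₀ (-1 : Matrix (Fin d) (Fin d) ℝ))ᵀ *
                Matrix.fromRows X₀ (-1 : Matrix (Fin d) (Fin d) ℝ))⁻¹ *
              (Matrix.fromRows X₀ (-1 : Matrix (Fin d) (Fin d) ℝ))ᵀ).submatrix
            Sum.inl Sum.inl).mulVec v = r • v}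
      (1 / (1 + specNorm X₀ ^ 2)) := by
  classical
  have htrans : X₀ᴴ = X₀ᵀ := by ext i j; simp [conjTranspose_apply]
  set c : ℝ := specNorm X₀ with hc
  have hc0 : 0 ≤ c := specNorm_nonneg X₀
  have h1c : (0:ℝ) < 1 + c ^ 2 := by positivity
  set A : Matrix (Fin n ⊕ Fin d) (Fin d) ℝ :=
    Matrix.fromRows X₀ (-1 : Matrix (Fin d) (Fin d) ℝ) with hA
  set S : Matrix (Fin n) (Fin n) ℝ := 1 + X₀ * X₀ᵀ with hS
  set B : Matrix (Fin d) (Fin d) ℝ := 1 + X₀ᵀ * X₀ with hBdef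
  have hB : Aᵀ * A = B := by
    rw [hA, transpose_fromRows, fromCols_mul_fromRows, hBdef]
    simp [add_comm]
  have hBpd : B.PosDef := by
    rw [hBdef]
    refine Matrix.PosDef.add_posSemidef Matrix.PosDef.one ?_
    rw [← htrans]; exact posSemidef_conjTranspose_mul_self X₀
  have hSpd : S.PosDef := by
    rw [hS]
    refine Matrix.PosDef.add_posSemidef Matrix.PosDef.one ?_
    rw [← htrans]; exact posSemidef_self_mul_conjTranspose X₀
  have hBdet : IsUnit B.det := (Matrix.isUnit_iff_isUnit_det B).1 hBpd.isUnit
  have hSdet : IsUnit S.det := (Matrix.isUnit_iff_isUnit_det S).1 hSpd.isUnit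
  -- the upper-left block of I - P equals S⁻¹
  have hsub : ((1 : Matrix (Fin n ⊕ Fin d) (Fin n ⊕ Fin d) ℝ) -
      A * (Aᵀ * A)⁻¹ * Aᵀ).submatrix Sum.inl Sum.inl = 1 - X₀ * B⁻¹ * X₀ᵀ := by
    rw [hB]
    ext i j
    simp [hA, Matrix.sub_apply, Matrix.mul_apply, Matrix.one_apply, Sum.inl.injEq]
  have hcomm : S * X₀ = X₀ * B := by
    rw [hS, hBdef, Matrix.add_mul, Matrix.mul_add, Matrix.one_mul, Matrix.mul_one,
      Matrix.mul_assoc]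
  have hright : S * (1 - X₀ * B⁻¹ * X₀ᵀ) = 1 := by
    have hBB : B * B⁻¹ = 1 := Matrix.mul_nonsing_inv B hBdet
    rw [Matrix.mul_sub, Matrix.mul_one, ← Matrix.mul_assoc, ← Matrix.mul_assoc, hcomm,
      Matrix.mul_assoc X₀ B B⁻¹, hBB, Matrix.mul_one, hS, add_sub_cancel_right]
  have hblock : ((1 : Matrix (Fin n ⊕ Fin d) (Fin n ⊕ Fin d) ℝ) -
      A * (Aᵀ * A)⁻¹ * Aᵀ).submatrix Sum.inl Sum.inl = S⁻¹ := by
    rw [hsub, Matrix.inv_eq_right_inv hright]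
  constructor
  · -- membership
    obtain ⟨v, hv0, hv⟩ := exists_top_eigvec hn X₀
    refine ⟨v, fun h => hv0 (by ext i; simpa using congrFun h i), ?_⟩
    rw [hblock]
    have hSv : S *ᵥ (v : Fin n → ℝ) = (1 + c ^ 2) • (v : Fin n → ℝ) := by
      rw [hS, Matrix.add_mulVec, Matrix.one_mulVec, hv, add_smul, one_smul]
    have hback : S⁻¹ *ᵥ (S *ᵥ (v : Fin n → ℝ)) = (v : Fin n → ℝ) := by
      rw [Matrix.mulVec_mulVec, Matrix.nonsing_inv_mul S hSdet, Matrix.one_mulVec]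
    have hvS : (v : Fin n → ℝ) = (1 + c ^ 2) • (S⁻¹ *ᵥ (v : Fin n → ℝ)) := by
      rw [← Matrix.mulVec_smul, ← hSv, hback]
    rw [one_div]
    exact ((inv_smul_eq_iff₀ h1c.ne').2 hvS).symm
  · -- lower bound
    rintro r ⟨v, hv0, hr⟩
    rw [hblock] at hr
    set v' : EuclideanSpace ℝ (Fin n) := WithLp.toLp 2 v with hv'
    have hv'0 : v' ≠ 0 := by
      intro h; apply hv0; have := congrArg WithLp.ofLp h; simpa [hv'] using this
    have hback : S *ᵥ (S⁻¹ *ᵥ v) = v := by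
      rw [Matrix.mulVec_mulVec, Matrix.mul_nonsing_inv S hSdet, Matrix.one_mulVec]
    have hr0 : r ≠ 0 := by
      rintro rfl
      rw [zero_smul] at hr
      rw [hr, Matrix.mulVec_zero] at hback
      exact hv0 hback.symm
    have hveq : v = r • (S *ᵥ v) := by
      conv_lhs => rw [← hback, hr, Matrix.mulVec_smul]
    have hSv : S *ᵥ v = r⁻¹ • v := ((inv_smul_eq_iff₀ hr0).2 hveq).symm
    have hdot : dotProduct v (S *ᵥ v) = r⁻¹ * dotProduct v v := by
      rw [hSv, dotProduct_smul, smul_eq_mul]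
    have hexpand : dotProduct v (S *ᵥ v) =
        dotProduct v v + dotProduct (X₀ᵀ *ᵥ v) (X₀ᵀ *ᵥ v) := by
      rw [hS, Matrix.add_mulVec, Matrix.one_mulVec, dotProduct_add,
        ← Matrix.mulVec_mulVec, Matrix.dotProduct_mulVec, ← Matrix.mulVec_transpose]
    have hvv : dotProduct v v = ‖v'‖ ^ 2 := dot_self_eq v'
    have hvvpos : (0:ℝ) < ‖v'‖ ^ 2 := by
      have := norm_pos_iff.2 hv'0
      positivity
    have hww0 : (0:ℝ) ≤ dotProduct (X₀ᵀ *ᵥ v) (X₀ᵀ *ᵥ v) := by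
      rw [show dotProduct (X₀ᵀ *ᵥ v) (X₀ᵀ *ᵥ v) = _ from dot_self_eq (WithLp.toLp 2 (X₀ᵀ *ᵥ v))]
      positivity
    have hwwle : dotProduct (X₀ᵀ *ᵥ v) (X₀ᵀ *ᵥ v) ≤ c ^ 2 * ‖v'‖ ^ 2 :=
      norm_transpose_mulVec_le X₀ v'
    have hkey : r⁻¹ * ‖v'‖ ^ 2 = ‖v'‖ ^ 2 + dotProduct (X₀ᵀ *ᵥ v) (X₀ᵀ *ᵥ v) := by
      rw [← hvv, ← hdot, hexpand, hvv]
    have hrinv1 : (1:ℝ) ≤ r⁻¹ := by nlinarith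
    have hrpos : 0 < r := by
      have : (0:ℝ) < r⁻¹ := lt_of_lt_of_le one_pos hrinv1
      exact inv_pos.1 this
    have hrinvle : r⁻¹ ≤ 1 + c ^ 2 := by nlinarith
    rw [div_le_iff₀ h1c]
    nlinarith [mul_inv_cancel₀ hr0]
end
end

section
/- Let V₁, V₂ be subspaces of ℝⁿ with dim V₁ = dim V₂, and let N be a symmetric positive definite matrix such that V₁ is an invariant subspace of N with N v = λ_min(N) v for all v ∈ V₁ (i.e. V₁ lies in the eigenspace of the smallest eigenvalue). Then ‖sin∠(V₂, V₁)‖ ≤ ‖sin∠(N^{1/2}V₂, N^{1/2}V₁)‖. -/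
noncomputable section
open Matrix

/-- The square root of a positive semidefinite matrix, as in the older Mathlib
(`Matrix.PosSemidef.sqrt`, since removed). -/
noncomputable def Matrix.PosSemidef.sqrt {n : Type*} [Fintype n] [DecidableEq n]
    {A : Matrix n n ℝ} (hA : A.PosSemidef) : Matrix n n ℝ :=
  hA.1.eigenvectorUnitary.1 * diagonal ((↑) ∘ (√·) ∘ hA.1.eigenvalues) *
    (star hA.1.eigenvectorUnitary : Matrix n n ℝ)

theorem Matrix.PosSemidef.posSemidef_sqrt {n : Type*} [Fintype n] [DecidableEq n]
    {A : Matrix n n ℝ} (hA : A.PosSemidef) : hA.sqrt.PosSemidef := by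
  have hD : (diagonal ((↑) ∘ (√·) ∘ hA.1.eigenvalues) : Matrix n n ℝ).PosSemidef := by
    rw [posSemidef_diagonal_iff]
    intro i
    simp [Real.sqrt_nonneg]
  have := hD.mul_mul_conjTranspose_same (hA.1.eigenvectorUnitary.1)
  simpa [Matrix.PosSemidef.sqrt, Matrix.star_eq_conjTranspose] using this

theorem Matrix.PosSemidef.sqrt_mul_self {n : Type*} [Fintype n] [DecidableEq n]
    {A : Matrix n n ℝ} (hA : A.PosSemidef) : hA.sqrt * hA.sqrt = A := by
  have hU : (star hA.1.eigenvectorUnitary : Matrix n n ℝ) * hA.1.eigenvectorUnitary.1 = 1 :=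
    Unitary.coe_star_mul_self _
  have hD : (diagonal ((↑) ∘ (√·) ∘ hA.1.eigenvalues) : Matrix n n ℝ) *
      diagonal ((↑) ∘ (√·) ∘ hA.1.eigenvalues) = diagonal (RCLike.ofReal ∘ hA.1.eigenvalues) := by
    rw [diagonal_mul_diagonal]
    congr 1; funext i
    simp [Real.mul_self_sqrt (hA.eigenvalues_nonneg i)]
  conv_rhs => rw [hA.1.spectral_theorem (𝕜 := ℝ), Unitary.conjStarAlgAut_apply]
  simp only [Matrix.PosSemidef.sqrt, Matrix.mul_assoc]
  rw [← Matrix.mul_assoc _ hA.1.eigenvectorUnitary.1, hU, Matrix.one_mul]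
  congr 1
  rw [← hD, Matrix.mul_assoc]

lemma sortedEig_zero_le {n : ℕ} (hn : 0 < n) {M : Matrix (Fin n) (Fin n) ℝ}
    (hM : M.IsHermitian) (i : Fin n) : sortedEig hM ⟨0, hn⟩ ≤ hM.eigenvalues i := by
  have h := Tuple.monotone_sort hM.eigenvalues (a := ⟨0, hn⟩)
    (b := (Tuple.sort hM.eigenvalues)⁻¹ i) (by exact Fin.mk_le_of_le_val (Nat.zero_le _))
  simpa [sortedEig] using h

lemma inner_toEuclideanLin_ge {n : ℕ} {M : Matrix (Fin n) (Fin n) ℝ} (hM : M.IsHermitian)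
    (c : ℝ) (hc : ∀ i, c ≤ hM.eigenvalues i) (x : EuclideanSpace ℝ (Fin n)) :
    c * ‖x‖ ^ 2 ≤ inner ℝ (Matrix.toEuclideanLin M x) x := by
  set b := hM.eigenvectorBasis
  have hb : ∀ j, Matrix.toEuclideanLin M (b j) = hM.eigenvalues j • b j := by
    intro j
    apply (WithLp.equiv 2 _).injective
    simpa [Matrix.toEuclideanLin_apply] using hM.mulVec_eigenvectorBasis j
  have h1 : (inner ℝ (Matrix.toEuclideanLin M x) x : ℝ)
      = ∑ i, hM.eigenvalues i * (inner ℝ (b i) x : ℝ) ^ 2 := by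
    rw [← b.sum_inner_mul_inner (Matrix.toEuclideanLin M x) x]
    congr 1; ext i
    have hsym : (Matrix.toEuclideanLin M).IsSymmetric := isHermitian_iff_isSymmetric.mp hM
    have : (inner ℝ (Matrix.toEuclideanLin M x) (b i) : ℝ)
        = inner ℝ x (Matrix.toEuclideanLin M (b i)) := hsym x (b i)
    rw [this, hb i, inner_smul_right]
    rw [real_inner_comm x (b i)]
    ring
  have h2 : (‖x‖ : ℝ) ^ 2 = ∑ i, (inner ℝ (b i) x : ℝ) ^ 2 := by
    rw [← real_inner_self_eq_norm_sq, ← b.sum_inner_mul_inner x x]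
    congr 1; ext i
    rw [real_inner_comm x (b i)]; ring
  rw [h1, h2, Finset.mul_sum]
  exact Finset.sum_le_sum fun i _ => by nlinarith [sq_nonneg (inner ℝ (b i) x : ℝ), hc i]

lemma projCLM_apply {ι : Type*} [Fintype ι] (W : Submodule ℝ (EuclideanSpace ℝ ι))
    (x : EuclideanSpace ℝ ι) : projCLM W x = ↑(W.orthogonalProjectionOnto x) := rfl

lemma sinAngle_eq_norm_comp {ι : Type*} [Fintype ι]
    (V W : Submodule ℝ (EuclideanSpace ℝ ι)) :
    sinAngle V W =
      ‖(ContinuousLinearMap.id ℝ (EuclideanSpace ℝ ι) - projCLM W).comp (projCLM V)‖ := by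
  have h1 : ContinuousLinearMap.adjoint
      ((projCLM V).comp (ContinuousLinearMap.id ℝ (EuclideanSpace ℝ ι) - projCLM W))
      = (ContinuousLinearMap.id ℝ (EuclideanSpace ℝ ι) - projCLM W).comp (projCLM V) := by
    have hPV : ContinuousLinearMap.adjoint (projCLM V) = projCLM V :=
      (isSelfAdjoint_starProjection V).adjoint_eq
    have hPW : ContinuousLinearMap.adjoint (projCLM W) = projCLM W :=
      (isSelfAdjoint_starProjection W).adjoint_eq
    rw [ContinuousLinearMap.adjoint_comp, map_sub, ContinuousLinearMap.adjoint_id, hPV, hPW]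
  rw [sinAngle, ← ContinuousLinearMap.adjoint.norm_map
    ((projCLM V).comp (ContinuousLinearMap.id ℝ (EuclideanSpace ℝ ι) - projCLM W)), h1]

set_option maxHeartbeats 2000000 in
/-- If V₁ lies in the eigenspace of the smallest eigenvalue of the positive definite
matrix N and dim V₁ = dim V₂, then ‖sin∠(V₂,V₁)‖ ≤ ‖sin∠(N^{1/2}V₂, N^{1/2}V₁)‖. -/
theorem sin_angle_rescaling {n : ℕ} (hn : 0 < n)
    (N : Matrix (Fin n) (Fin n) ℝ) (hN : N.PosDef)
    (V₁ V₂ : Submodule ℝ (EuclideanSpace ℝ (Fin n)))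
    (hdim : Module.finrank ℝ V₁ = Module.finrank ℝ V₂)
    (heig : ∀ v ∈ V₁, Matrix.toEuclideanLin N v = sortedEig hN.1 ⟨0, hn⟩ • v) :
    sinAngle V₂ V₁ ≤
      sinAngle (Submodule.map (Matrix.toEuclideanLin hN.posSemidef.sqrt) V₂)
        (Submodule.map (Matrix.toEuclideanLin hN.posSemidef.sqrt) V₁) := by
  set lam0 : ℝ := sortedEig hN.1 ⟨0, hn⟩ with hlam0
  set μ : ℝ := Real.sqrt lam0 with hμ
  have hlam_pos : 0 < lam0 := hN.eigenvalues_pos _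
  have hμpos : 0 < μ := Real.sqrt_pos.mpr hlam_pos
  have hμsq : μ ^ 2 = lam0 := Real.sq_sqrt hlam_pos.le
  set T : EuclideanSpace ℝ (Fin n) →ₗ[ℝ] EuclideanSpace ℝ (Fin n) :=
    Matrix.toEuclideanLin hN.posSemidef.sqrt with hT
  -- basic facts about T
  have hTsym : T.IsSymmetric :=
    isHermitian_iff_isSymmetric.mp hN.posSemidef.posSemidef_sqrt.1
  have hTT : ∀ x, T (T x) = Matrix.toEuclideanLin N x := by
    intro x
    rw [← hN.posSemidef.sqrt_mul_self]
    simp [hT, Matrix.toEuclideanLin_apply, Matrix.mulVec_mulVec]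
  have hTnn : ∀ x, (0 : ℝ) ≤ inner ℝ (T x) x := by
    intro x
    have := inner_toEuclideanLin_ge hN.posSemidef.posSemidef_sqrt.1 0
      (fun i => hN.posSemidef.posSemidef_sqrt.eigenvalues_nonneg i) x
    simpa using this
  have hNlow : ∀ x, lam0 * ‖x‖ ^ 2 ≤ inner ℝ (Matrix.toEuclideanLin N x) x :=
    fun x => inner_toEuclideanLin_ge hN.1 lam0 (fun i => sortedEig_zero_le hn hN.1 i) x
  -- T acts as μ • on V₁
  have hTv : ∀ v ∈ V₁, T v = μ • v := by
    intro v hv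
    set w := T v - μ • v with hw
    have hTw : T w = -μ • w := by
      have h1 : T w + μ • w = 0 := by
        have h2 : T (T v) = lam0 • v := by rw [hTT v, heig v hv]
        have h3 : T w = lam0 • v - μ • T v := by
          rw [hw, LinearMap.map_sub, LinearMap.map_smul, h2]
        rw [h3, hw, ← hμsq]
        module
      have h3 := eq_neg_of_add_eq_zero_left h1
      rw [h3]; module
    have h0 : (0 : ℝ) ≤ inner ℝ (T w) w := hTnn w
    rw [hTw] at h0
    have hin : (inner ℝ ((-μ • w : EuclideanSpace ℝ (Fin n))) w : ℝ) = -(μ * ‖w‖ ^ 2) := by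
      rw [real_inner_smul_left, real_inner_self_eq_norm_sq]; ring
    rw [hin] at h0
    have hwz : w = 0 := by
      have h4 : ‖w‖ ^ 2 ≤ 0 := by nlinarith
      have h5 : ‖w‖ = 0 := by nlinarith [norm_nonneg w, sq_nonneg ‖w‖]
      exact norm_eq_zero.mp h5
    exact sub_eq_zero.mp hwz
  -- norm lower bound for T
  have hTnormsq : ∀ x : EuclideanSpace ℝ (Fin n), μ ^ 2 * ‖x‖ ^ 2 ≤ ‖T x‖ ^ 2 := by
    intro x
    have h1 : (inner ℝ (T x) (T x) : ℝ) = inner ℝ (Matrix.toEuclideanLin N x) x := by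
      rw [← hTT x]; exact (hTsym (T x) x).symm
    have h2 := hNlow x
    rw [← h1, real_inner_self_eq_norm_sq] at h2
    rw [hμsq]; exact h2
  -- T maps V₁ onto V₁
  have hmap1 : Submodule.map T V₁ = V₁ := by
    apply le_antisymm
    · rintro _ ⟨v, hv, rfl⟩
      rw [hTv v hv]; exact V₁.smul_mem μ hv
    · intro v hv
      refine ⟨μ⁻¹ • v, V₁.smul_mem _ hv, ?_⟩
      rw [hTv _ (V₁.smul_mem _ hv), smul_smul, mul_inv_cancel₀ hμpos.ne', one_smul]
  -- T maps V₁ᗮ into V₁ᗮ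
  have hTperp : ∀ b ∈ V₁ᗮ, T b ∈ V₁ᗮ := by
    intro b hb
    rw [Submodule.mem_orthogonal]
    intro u hu
    have h1 : (inner ℝ u (T b) : ℝ) = inner ℝ (T u) b := (hTsym u b).symm
    rw [h1, hTv u hu, real_inner_smul_left,
      (Submodule.mem_orthogonal V₁ b).mp hb u hu, mul_zero]
  -- reduce to adjoint form
  rw [sinAngle_eq_norm_comp, sinAngle_eq_norm_comp, hmap1]
  set c := ‖(ContinuousLinearMap.id ℝ (EuclideanSpace ℝ (Fin n)) - projCLM V₁).comp
    (projCLM (Submodule.map T V₂))‖ with hcdef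
  -- key pointwise estimate on V₂
  have key : ∀ v ∈ V₂, ‖v - (projCLM V₁) v‖ ≤ c * ‖v‖ := by
    intro v hvmem
    by_cases hv0 : v = 0
    · simp [hv0]
    have hvpos : 0 < ‖v‖ := norm_pos_iff.mpr hv0
    set a : EuclideanSpace ℝ (Fin n) := ↑(V₁.orthogonalProjectionOnto v) with hadef
    have haV : a ∈ V₁ := SetLike.coe_mem _
    set b : EuclideanSpace ℝ (Fin n) := v - a with hbdef
    have hbperp : b ∈ V₁ᗮ := Submodule.sub_starProjection_mem_orthogonal v
    have hvab : v = a + b := by rw [hbdef]; abel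
    set y : EuclideanSpace ℝ (Fin n) := T v with hydef
    have hyV : y ∈ Submodule.map T V₂ := ⟨v, hvmem, rfl⟩
    have hTbperp : T b ∈ V₁ᗮ := hTperp b hbperp
    have hy : y = μ • a + T b := by
      rw [hydef, hvab, map_add, hTv a haV]
    have hP1y : (projCLM V₁) y = μ • a := by
      rw [projCLM_apply, hy, map_add,
        Submodule.orthogonalProjectionOnto_apply_of_mem_orthogonal hTbperp, add_zero]
      exact Submodule.starProjection_eq_self_iff.mpr (V₁.smul_mem μ haV)
    have h1y : y - (projCLM V₁) y = T b := by
      rw [hP1y, hy]; abel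
    have hinnab : (inner ℝ a b : ℝ) = 0 := (Submodule.mem_orthogonal V₁ b).mp hbperp a haV
    have hinnaTb : (inner ℝ ((μ • a : EuclideanSpace ℝ (Fin n))) (T b) : ℝ) = 0 := by
      rw [real_inner_smul_left, (Submodule.mem_orthogonal V₁ (T b)).mp hTbperp a haV, mul_zero]
    have hy2 : ‖y‖ ^ 2 = μ ^ 2 * ‖a‖ ^ 2 + ‖T b‖ ^ 2 := by
      rw [hy, norm_add_sq_real, hinnaTb, norm_smul]
      simp [abs_of_pos hμpos]
      ring
    have hv2 : ‖v‖ ^ 2 = ‖a‖ ^ 2 + ‖b‖ ^ 2 := by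
      rw [hvab, norm_add_sq_real, hinnab]
      ring
    have hTb2 : μ ^ 2 * ‖b‖ ^ 2 ≤ ‖T b‖ ^ 2 := hTnormsq b
    have hyle : μ ^ 2 * ‖v‖ ^ 2 ≤ ‖y‖ ^ 2 := hTnormsq v
    have hypos : 0 < ‖y‖ := by
      rcases eq_or_ne y 0 with h | h
      · exfalso; rw [h, norm_zero] at hyle
        nlinarith [mul_pos (pow_pos hμpos 2) (pow_pos hvpos 2)]
      · exact norm_pos_iff.mpr h
    have hcy : ‖T b‖ ≤ c * ‖y‖ := by
      have happ := ContinuousLinearMap.le_opNorm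
        ((ContinuousLinearMap.id ℝ (EuclideanSpace ℝ (Fin n)) - projCLM V₁).comp
          (projCLM (Submodule.map T V₂))) y
      have hPy : (projCLM (Submodule.map T V₂)) y = y := by
        rw [projCLM_apply]
        exact Submodule.starProjection_eq_self_iff.mpr hyV
      rw [ContinuousLinearMap.comp_apply, ContinuousLinearMap.sub_apply,
        ContinuousLinearMap.id_apply, hPy, h1y] at happ
      exact happ
    have hstep1 : (‖b‖ * ‖y‖) ^ 2 ≤ (‖T b‖ * ‖v‖) ^ 2 := by
      have h7 := mul_le_mul_of_nonneg_right hTb2 (sq_nonneg ‖a‖)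
      nlinarith [h7, hy2, hv2, sq_nonneg ‖b‖, sq_nonneg ‖T b‖]
    have hstep2 : ‖b‖ * ‖y‖ ≤ ‖T b‖ * ‖v‖ := by
      have h8 := Real.sqrt_le_sqrt hstep1
      rwa [Real.sqrt_sq (by positivity), Real.sqrt_sq (by positivity)] at h8
    have hstep3 : ‖b‖ * ‖y‖ ≤ (c * ‖v‖) * ‖y‖ := by
      calc ‖b‖ * ‖y‖ ≤ ‖T b‖ * ‖v‖ := hstep2
        _ ≤ (c * ‖y‖) * ‖v‖ := mul_le_mul_of_nonneg_right hcy hvpos.le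
        _ = (c * ‖v‖) * ‖y‖ := by ring
    have hb_le : ‖b‖ ≤ c * ‖v‖ := le_of_mul_le_mul_right hstep3 hypos
    have hPv : (projCLM V₁) v = a := rfl
    rw [hPv, ← hbdef]
    exact hb_le
  -- conclude via operator norm bound
  apply ContinuousLinearMap.opNorm_le_bound _ (norm_nonneg _)
  intro x
  rw [ContinuousLinearMap.comp_apply, ContinuousLinearMap.sub_apply,
    ContinuousLinearMap.id_apply]
  set v : EuclideanSpace ℝ (Fin n) := (projCLM V₂) x with hvdef
  have hvmem : v ∈ V₂ := SetLike.coe_mem _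
  have hvnorm : ‖v‖ ≤ ‖x‖ := by
    have h1 := V₂.orthogonalProjectionOnto.le_opNorm x
    have h2 : ‖V₂.orthogonalProjectionOnto‖ * ‖x‖ ≤ ‖x‖ :=
      mul_le_of_le_one_left (norm_nonneg x) (Submodule.orthogonalProjectionOnto_norm_le V₂)
    exact le_trans h1 h2
  calc ‖v - (projCLM V₁) v‖ ≤ c * ‖v‖ := key v hvmem
    _ ≤ c * ‖x‖ := mul_le_mul_of_nonneg_left hvnorm (norm_nonneg _)
end
end
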